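/- Let p be an odd prime and S a simultaneously negacyclic subspace of F_p^n × F_p^n, identified with a subset of R × R where R = F_p[X]/(X^n+1). Let g be the monic generator of the ideal of R given by the image of the first projection F = {a : (a,b) ∈ S for some b}. Then there is a unique f ∈ R with (g,f) ∈ S if and only if every element of S of the form (0,b) has b = 0. Moreover, if there is such a unique f (so that (g,f) is the generating pair of S), then S = {(a·g, a·f) : a ∈ R}. -/

import Mathlib

open Polynomial

/-- The negacyclic shift `N : F_p^n → F_p^n`. -/
def negashift (p n : ℕ) (hn : 0 < n) (u : Fin n → ZMod p) : Fin n → ZMod p :=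
  fun i => if (i : ℕ) = 0 then -u ⟨n - 1, Nat.sub_lt hn Nat.one_pos⟩
           else u ⟨(i : ℕ) - 1, Nat.lt_of_le_of_lt (Nat.sub_le _ _) i.isLt⟩

/-- The cyclotomic ring `R = F_p[X]/(X^n + 1)`. -/
abbrev Rpn (p n : ℕ) := Polynomial (ZMod p) ⧸ Ideal.span {(X : Polynomial (ZMod p)) ^ n + 1}

/-- The quotient map `F_p[X] → R`. -/
noncomputable def mkR (p n : ℕ) : Polynomial (ZMod p) →+* Rpn p n :=
  Ideal.Quotient.mk (Ideal.span {(X : Polynomial (ZMod p)) ^ n + 1})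

/-- The polynomial `a_0 + a_1 X + ⋯ + a_{n−1} X^{n−1}` attached to a vector. -/
noncomputable def toPoly (p n : ℕ) (a : Fin n → ZMod p) : Polynomial (ZMod p) :=
  ∑ j : Fin n, C (a j) * X ^ (j : ℕ)

/-- The identification `F_p^n → R`, `a ↦ a(x)`. -/
noncomputable def toR (p n : ℕ) (a : Fin n → ZMod p) : Rpn p n := mkR p n (toPoly p n a)

/-- The identification `F_p^n × F_p^n → R × R`. -/
noncomputable def toR2 (p n : ℕ) (ab : (Fin n → ZMod p) × (Fin n → ZMod p)) :
    Rpn p n × Rpn p n := (toR p n ab.1, toR p n ab.2)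

set_option linter.unusedSectionVars false
set_option linter.unusedVariables false

section Aux
variable (p n : ℕ) [Fact p.Prime]

lemma toPoly_coeff (a : Fin n → ZMod p) (k : ℕ) :
    (toPoly p n a).coeff k = if h : k < n then a ⟨k, h⟩ else 0 := by
  rw [toPoly, Polynomial.finset_sum_coeff]
  split
  · next h =>
    rw [Finset.sum_eq_single (⟨k, h⟩ : Fin n)]
    · simp
    · intro j _ hj
      simp only [coeff_C_mul, coeff_X_pow]
      rw [if_neg, mul_zero]
      intro hk; exact hj (Fin.ext hk.symm)
    · simp
  · next h =>
    apply Finset.sum_eq_zero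
    intro j _
    simp only [coeff_C_mul, coeff_X_pow]
    rw [if_neg, mul_zero]
    intro hk; exact h (hk ▸ j.isLt)

lemma toPoly_add (a b : Fin n → ZMod p) :
    toPoly p n (a + b) = toPoly p n a + toPoly p n b := by
  simp [toPoly, C_add, add_mul, Finset.sum_add_distrib]

lemma toPoly_sub (a b : Fin n → ZMod p) :
    toPoly p n (a - b) = toPoly p n a - toPoly p n b := by
  simp [toPoly, C_sub, sub_mul, Finset.sum_sub_distrib]

lemma toPoly_smul (c : ZMod p) (a : Fin n → ZMod p) :
    toPoly p n (c • a) = C c * toPoly p n a := by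
  simp [toPoly, Finset.mul_sum, C_mul, mul_assoc]

lemma toR_zero : toR p n 0 = 0 := by
  simp [toR, toPoly]

lemma toR_add (a b : Fin n → ZMod p) : toR p n (a + b) = toR p n a + toR p n b := by
  rw [toR, toR, toR, toPoly_add, map_add]

lemma toR_sub (a b : Fin n → ZMod p) : toR p n (a - b) = toR p n a - toR p n b := by
  rw [toR, toR, toR, toPoly_sub, map_sub]

lemma toPoly_degree_lt (a : Fin n → ZMod p) : (toPoly p n a).degree < n := by
  rw [Polynomial.degree_lt_iff_coeff_zero]
  intro m hm
  have hnm : ¬ m < n := by exact_mod_cast not_lt.2 hm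
  rw [toPoly_coeff, dif_neg hnm]

lemma mkR_eq_zero (q : Polynomial (ZMod p)) :
    mkR p n q = 0 ↔ ((X : Polynomial (ZMod p)) ^ n + 1) ∣ q := by
  rw [mkR, Ideal.Quotient.eq_zero_iff_mem, Ideal.mem_span_singleton]

lemma toR_eq_zero (hn : 0 < n) {a : Fin n → ZMod p} (h : toR p n a = 0) : a = 0 := by
  have hd : toPoly p n a = 0 := by
    apply Polynomial.eq_zero_of_dvd_of_degree_lt ((mkR_eq_zero p n _).1 h)
    have hdeg : ((X : Polynomial (ZMod p)) ^ n + 1).degree = n := by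
      simpa using Polynomial.degree_X_pow_add_C hn (1 : ZMod p)
    rw [hdeg]; exact toPoly_degree_lt p n a
  funext j
  have := congrArg (fun q => q.coeff (j : ℕ)) hd
  simpa [toPoly_coeff, j.isLt] using this

lemma toR_inj (hn : 0 < n) {a b : Fin n → ZMod p} (h : toR p n a = toR p n b) : a = b := by
  have : a - b = 0 := toR_eq_zero p n hn (by rw [toR_sub, h, sub_self])
  exact sub_eq_zero.mp this

lemma toPoly_negashift (hn : 0 < n) (u : Fin n → ZMod p) :
    toPoly p n (negashift p n hn u) =
      X * toPoly p n u - C (u ⟨n - 1, Nat.sub_lt hn Nat.one_pos⟩) * (X ^ n + 1) := by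
  ext k
  rcases k with _ | k
  · simp [toPoly_coeff, negashift, hn, coeff_one, hn.ne, hn.ne']
  · simp only [coeff_sub, coeff_X_mul, coeff_C_mul, mul_add, coeff_add, coeff_X_pow, coeff_one,
      toPoly_coeff]
    by_cases h1 : k + 1 < n
    · have hk : k < n := by omega
      have hne : k + 1 ≠ n := by omega
      rw [dif_pos h1, dif_pos hk, if_neg hne, if_neg (by omega : k + 1 ≠ 0)]
      simp [negashift]
    · by_cases h2 : k + 1 = n
      · have hk : k < n := by omega
        rw [dif_neg h1, dif_pos hk, if_pos h2, if_neg (by omega : k + 1 ≠ 0)]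
        have : (⟨k, hk⟩ : Fin n) = ⟨n - 1, Nat.sub_lt hn Nat.one_pos⟩ := by
          apply Fin.ext; simp; omega
        rw [this]; ring
      · rw [dif_neg h1, dif_neg (by omega : ¬ k < n), if_neg h2,
          if_neg (by omega : k + 1 ≠ 0)]
        ring

lemma toR_negashift (hn : 0 < n) (u : Fin n → ZMod p) :
    toR p n (negashift p n hn u) = mkR p n X * toR p n u := by
  have h0 : mkR p n ((X : Polynomial (ZMod p)) ^ n + 1) = 0 := (mkR_eq_zero p n _).2 dvd_rfl
  rw [toR, toPoly_negashift p n hn, map_sub, map_mul, map_mul, h0, mul_zero, sub_zero, toR]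

variable (S : Submodule (ZMod p) ((Fin n → ZMod p) × (Fin n → ZMod p)))

lemma T_Xmul (hn : 0 < n)
    (hneg : ∀ ab ∈ S, (negashift p n hn ab.1, negashift p n hn ab.2) ∈ S)
    (x y : Rpn p n) (h : (x, y) ∈ toR2 p n '' S) :
    (mkR p n X * x, mkR p n X * y) ∈ toR2 p n '' S := by
  obtain ⟨⟨u, v⟩, hS, huv⟩ := h
  have hx : toR p n u = x := congrArg Prod.fst huv
  have hy : toR p n v = y := congrArg Prod.snd huv
  subst hx; subst hy
  exact ⟨(negashift p n hn u, negashift p n hn v), hneg _ hS,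
    by simp [toR2, toR_negashift]⟩

lemma T_mulP (hn : 0 < n)
    (hneg : ∀ ab ∈ S, (negashift p n hn ab.1, negashift p n hn ab.2) ∈ S)
    (q : Polynomial (ZMod p)) :
    ∀ x y : Rpn p n, (x, y) ∈ toR2 p n '' S →
      (mkR p n q * x, mkR p n q * y) ∈ toR2 p n '' S := by
  induction q using Polynomial.induction_on with
  | C a =>
    rintro x y ⟨⟨u, v⟩, hS, huv⟩
    have hx : toR p n u = x := congrArg Prod.fst huv
    have hy : toR p n v = y := congrArg Prod.snd huv
    subst hx; subst hy
    refine ⟨a • (u, v), S.smul_mem a hS, ?_⟩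
    simp only [toR2, Prod.smul_fst, Prod.smul_snd, toR, toPoly_smul, map_mul]
  | add f g hf hg =>
    intro x y hxy
    obtain ⟨⟨u1, v1⟩, hS1, h1⟩ := hf x y hxy
    obtain ⟨⟨u2, v2⟩, hS2, h2⟩ := hg x y hxy
    refine ⟨(u1, v1) + (u2, v2), S.add_mem hS1 hS2, ?_⟩
    have h1a : toR p n u1 = mkR p n f * x := congrArg Prod.fst h1
    have h1b : toR p n v1 = mkR p n f * y := congrArg Prod.snd h1
    have h2a : toR p n u2 = mkR p n g * x := congrArg Prod.fst h2
    have h2b : toR p n v2 = mkR p n g * y := congrArg Prod.snd h2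
    simp only [toR2, Prod.fst_add, Prod.snd_add, toR_add, h1a, h1b, h2a, h2b, map_add,
      add_mul, Prod.mk.injEq]
  | monomial k a ih =>
    intro x y hxy
    have h1 := ih x y hxy
    have h2 := T_Xmul p n S hn hneg _ _ h1
    have he : mkR p n (C a * X ^ (k + 1)) = mkR p n X * mkR p n (C a * X ^ k) := by
      rw [← map_mul]; ring_nf
    rw [he, mul_assoc, mul_assoc]
    exact h2

lemma T_mulR (hn : 0 < n)
    (hneg : ∀ ab ∈ S, (negashift p n hn ab.1, negashift p n hn ab.2) ∈ S)
    (r : Rpn p n) (x y : Rpn p n) (h : (x, y) ∈ toR2 p n '' S) :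
    (r * x, r * y) ∈ toR2 p n '' S := by
  obtain ⟨q, rfl⟩ := Ideal.Quotient.mk_surjective r
  exact T_mulP p n S hn hneg q x y h

end Aux

/-- for a simultaneously negacyclic subspace `S` with monic generator `g`
for the ideal of `R` given by the first projection of `S`: there is a unique `f ∈ R` with
`(g, f) ∈ S` iff every element of `S` of the form `(0, b)` has `b = 0`; moreover when such
a unique `f` exists, `S = {(a·g, a·f) : a ∈ R}`. -/
theorem stmt4 (p n : ℕ) [Fact p.Prime] (hp : Odd p) (hn : 0 < n)
    (S : Submodule (ZMod p) ((Fin n → ZMod p) × (Fin n → ZMod p)))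
    (hneg : ∀ ab ∈ S, (negashift p n hn ab.1, negashift p n hn ab.2) ∈ S)
    (g : Polynomial (ZMod p)) (hgm : g.Monic) (hgdvd : g ∣ X ^ n + 1)
    (hgen : {r : Rpn p n | ∃ ab ∈ S, toR p n ab.1 = r}
        = (Ideal.span {mkR p n g} : Set (Rpn p n))) :
    ((∃! f : Rpn p n,
        (mkR p n g, f) ∈ toR2 p n '' (S : Set ((Fin n → ZMod p) × (Fin n → ZMod p)))) ↔
      (∀ b : Fin n → ZMod p, ((0 : Fin n → ZMod p), b) ∈ S → b = 0)) ∧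
    (∀ f : Rpn p n,
      ((mkR p n g, f) ∈ toR2 p n '' (S : Set ((Fin n → ZMod p) × (Fin n → ZMod p))) ∧
        (∀ f' : Rpn p n,
          (mkR p n g, f') ∈ toR2 p n '' (S : Set ((Fin n → ZMod p) × (Fin n → ZMod p)))
            → f' = f)) →
      toR2 p n '' (S : Set ((Fin n → ZMod p) × (Fin n → ZMod p)))
        = {w : Rpn p n × Rpn p n | ∃ a : Rpn p n, w = (a * mkR p n g, a * f)}) := by
  classical
  have hzero : ∀ f : Rpn p n,
      ((mkR p n g, f) ∈ toR2 p n '' (S : Set _) ∧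
        ∀ f', (mkR p n g, f') ∈ toR2 p n '' (S : Set _) → f' = f) →
      ∀ b : Fin n → ZMod p, ((0 : Fin n → ZMod p), b) ∈ S → b = 0 := by
    rintro f ⟨hf, huniq⟩ b hb
    obtain ⟨⟨u, v⟩, hS, h⟩ := hf
    have hx : toR p n u = mkR p n g := congrArg Prod.fst h
    have hy : toR p n v = f := congrArg Prod.snd h
    have h2 : (mkR p n g, f + toR p n b) ∈ toR2 p n '' (S : Set _) := by
      refine ⟨(u, v) + (0, b), S.add_mem hS hb, ?_⟩
      simp [toR2, Prod.fst_add, Prod.snd_add, toR_add, hx, hy, toR_zero]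
    have h3 := huniq _ h2
    have hb0 : toR p n b = 0 := by
      have := add_eq_left.mp h3
      exact this
    exact toR_eq_zero p n hn hb0
  constructor
  · constructor
    · rintro ⟨f, hf, huniq⟩
      exact hzero f ⟨hf, fun f' h => huniq f' h⟩
    · intro H
      have hg : mkR p n g ∈ (Ideal.span {mkR p n g} : Set (Rpn p n)) :=
        Ideal.subset_span (Set.mem_singleton _)
      rw [← hgen] at hg
      obtain ⟨⟨u, v⟩, hS, hu⟩ := hg
      refine ⟨toR p n v, ⟨(u, v), hS, ?_⟩, ?_⟩
      · simp only [toR2, hu]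
      · rintro f' ⟨⟨u', v'⟩, hS', h'⟩
        have hu' : toR p n u' = mkR p n g := congrArg Prod.fst h'
        have hv' : toR p n v' = f' := congrArg Prod.snd h'
        have huu : u' = u := toR_inj p n hn (by rw [hu', hu])
        have hd : ((0 : Fin n → ZMod p), v' - v) ∈ S := by
          have hsub := S.sub_mem hS' hS
          have : ((u', v') - (u, v) : _ × _) = ((0 : Fin n → ZMod p), v' - v) := by
            rw [Prod.mk_sub_mk, huu, sub_self]
          rwa [this] at hsub
        have hv0 : v' - v = 0 := H _ hd
        rw [← hv', sub_eq_zero.mp hv0]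
  · rintro f ⟨hf, huniq⟩
    have H : ∀ b : Fin n → ZMod p, ((0 : Fin n → ZMod p), b) ∈ S → b = 0 :=
      hzero f ⟨hf, huniq⟩
    obtain ⟨⟨ug, vg⟩, hSg, hg2⟩ := hf
    have hug : toR p n ug = mkR p n g := congrArg Prod.fst hg2
    have hvg : toR p n vg = f := congrArg Prod.snd hg2
    have hafT : ∀ a : Rpn p n, (a * mkR p n g, a * f) ∈ toR2 p n '' (S : Set _) := by
      intro a
      rw [← hug, ← hvg]
      exact T_mulR p n S hn hneg a _ _ ⟨(ug, vg), hSg, rfl⟩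
    ext ⟨x, y⟩
    constructor
    · rintro ⟨⟨u, v⟩, hS, h⟩
      have hu : toR p n u = x := congrArg Prod.fst h
      have hv : toR p n v = y := congrArg Prod.snd h
      have hxmem : x ∈ (Ideal.span {mkR p n g} : Set (Rpn p n)) := by
        rw [← hgen]; exact ⟨(u, v), hS, hu⟩
      obtain ⟨a, ha⟩ := Ideal.mem_span_singleton'.mp hxmem
      obtain ⟨⟨w1, w2⟩, hSw, hw⟩ := hafT a
      have hw1 : toR p n w1 = a * mkR p n g := congrArg Prod.fst hw
      have hw2 : toR p n w2 = a * f := congrArg Prod.snd hw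
      have huw : u = w1 := toR_inj p n hn (by rw [hu, hw1, ha])
      have hvw : ((0 : Fin n → ZMod p), v - w2) ∈ S := by
        have hsub := S.sub_mem hS hSw
        have : ((u, v) - (w1, w2) : _ × _) = ((0 : Fin n → ZMod p), v - w2) := by
          rw [Prod.mk_sub_mk, huw, sub_self]
        rwa [this] at hsub
      have hv2 : v - w2 = 0 := H _ hvw
      refine ⟨a, ?_⟩
      have hyaf : y = a * f := by rw [← hv, sub_eq_zero.mp hv2, hw2]
      rw [← ha, hyaf]
    · rintro ⟨a, ha⟩
      rw [ha]
      exact hafT a
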